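/- Let G be a compact group, f continuous on G, Nf(s,t) = f(st⁻¹), and π, σ irreducible unitary representations of G with σ not equivalent to π̄. Then the Fourier coefficient (Nf)^(π×σ) = 0. -/

import Mathlib

open MeasureTheory Matrix
open scoped Kronecker ComplexOrder

attribute [local instance] Matrix.normedAddCommGroup Matrix.normedSpace

noncomputable instance matrixContinuousENormAux (m n : Type*) [Fintype m] [Fintype n] :
    ContinuousENorm (Matrix m n ℂ) :=
  SeminormedAddGroup.toContinuousENorm

noncomputable section

def frobNorm {m n : Type*} [Fintype m] [Fintype n] (A : Matrix m n ℂ) : ℝ :=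
  Real.sqrt (∑ i, ∑ j, ‖A i j‖ ^ 2)

def traceNorm {n : Type*} [Fintype n] [DecidableEq n] (A : Matrix n n ℂ) : ℝ :=
  ∑ i, Real.sqrt ((Matrix.posSemidef_conjTranspose_mul_self A).1.eigenvalues i)

def fourierCoef {G : Type*} [MeasurableSpace G] (μ : Measure G) (f : G → ℂ)
    {n : Type*} [Fintype n] (ρ : G → Matrix n n ℂ) : Matrix n n ℂ :=
  ∫ s, f s • (ρ s).map (starRingEnd ℂ) ∂μ

section AuxInvariance

variable {G : Type} [Group G] [TopologicalSpace G] [IsTopologicalGroup G] [CompactSpace G]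
  [MeasurableSpace G] [BorelSpace G]
  {E : Type*} [NormedAddCommGroup E] [NormedSpace ℝ E] [CompleteSpace E]
  (μ : Measure G) [μ.IsHaarMeasure] [IsProbabilityMeasure μ]

lemma aux_integral_inv (F : G → E) (hF : Continuous F) :
    ∫ s, F s⁻¹ ∂μ = ∫ s, F s ∂μ := by
  have key : ∫ s, (∫ t, F (s⁻¹ * t) ∂μ) ∂μ = ∫ t, (∫ s, F (s⁻¹ * t) ∂μ) ∂μ := by
    apply integral_integral_swap_of_hasCompactSupport
    · exact hF.comp ((continuous_fst.inv).mul continuous_snd)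
    · exact HasCompactSupport.of_compactSpace _
  have h1 : ∀ s : G, ∫ t, F (s⁻¹ * t) ∂μ = ∫ t, F t ∂μ := fun s =>
    integral_mul_left_eq_self F s⁻¹
  have h2 : ∀ t : G, ∫ s, F (s⁻¹ * t) ∂μ = ∫ s, F s⁻¹ ∂μ := by
    intro t
    have h := integral_mul_left_eq_self (μ := μ) (fun s => F (s⁻¹ * t)) t
    simpa [_root_.mul_inv_rev, mul_assoc] using h.symm
  simp only [h1] at key
  simp only [h2] at key
  simpa [integral_const] using key.symm

lemma aux_integral_mul_right (F : G → E) (hF : Continuous F) (g : G) :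
    ∫ s, F (s * g) ∂μ = ∫ s, F s ∂μ := by
  have A : ∫ s, F (s⁻¹ * g) ∂μ = ∫ s, F (s * g) ∂μ :=
    aux_integral_inv μ (fun s => F (s * g)) (hF.comp (continuous_mul_right g))
  have B : ∫ s, F (s⁻¹ * g) ∂μ = ∫ s, F s⁻¹ ∂μ := by
    have h := integral_mul_left_eq_self (μ := μ) (fun s => F (s⁻¹ * g)) g
    simpa [_root_.mul_inv_rev, mul_assoc] using h.symm
  rw [← A, B, aux_integral_inv μ F hF]

end AuxInvariance

section AuxMul

variable {α : Type*} [MeasurableSpace α] {μ : Measure α} {n : Type*} [Fintype n] [DecidableEq n]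

omit [DecidableEq n] in
lemma aux_integral_const_mul (C : Matrix n n ℂ) {F : α → Matrix n n ℂ}
    (hF : Integrable F μ) : ∫ a, C * F a ∂μ = C * ∫ a, F a ∂μ := by
  have h := ((LinearMap.mulLeft ℂ C).toContinuousLinearMap).integral_comp_comm hF
  exact h

omit [DecidableEq n] in
lemma aux_integral_mul_const (C : Matrix n n ℂ) {F : α → Matrix n n ℂ}
    (hF : Integrable F μ) : ∫ a, F a * C ∂μ = (∫ a, F a ∂μ) * C := by
  have h := ((LinearMap.mulRight ℂ C).toContinuousLinearMap).integral_comp_comm hF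
  exact h

end AuxMul

/-- For a compact group G, continuous f, Nf(s,t) = f(st⁻¹), and irreducible
unitary representations π, σ with σ not equivalent to π̄ (i.e. there is no
nonzero intertwiner between σ and π̄), the Fourier coefficient of Nf at the
Kronecker product representation π × σ vanishes. -/


theorem fourierCoef_twisted_eq_zero
    {G : Type} [Group G] [TopologicalSpace G] [IsTopologicalGroup G] [CompactSpace G]
    [MeasurableSpace G] [BorelSpace G]
    (μ : Measure G) [μ.IsHaarMeasure] [IsProbabilityMeasure μ]
    (d d' : ℕ) (π : G → Matrix (Fin d) (Fin d) ℂ) (σ : G → Matrix (Fin d') (Fin d') ℂ)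
    (hπone : π 1 = 1) (hπmul : ∀ s t, π (s * t) = π s * π t) (hπcont : Continuous π)
    (hπunitary : ∀ s, π s * (π s)ᴴ = 1)
    (hπirr : ∀ A : Matrix (Fin d) (Fin d) ℂ, (∀ s, π s * A = A * π s) → ∃ c : ℂ, A = c • 1)
    (hσone : σ 1 = 1) (hσmul : ∀ s t, σ (s * t) = σ s * σ t) (hσcont : Continuous σ)
    (hσunitary : ∀ s, σ s * (σ s)ᴴ = 1)
    (hσirr : ∀ A : Matrix (Fin d') (Fin d') ℂ, (∀ s, σ s * A = A * σ s) → ∃ c : ℂ, A = c • 1)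
    -- σ is not equivalent to π̄ : every intertwiner from σ to π̄ is zero
    (hineq : ∀ T : Matrix (Fin d') (Fin d) ℂ,
      (∀ s, σ s * T = T * (π s).map (starRingEnd ℂ)) → T = 0)
    (f : G → ℂ) (hf : Continuous f) :
    (∫ s, (∫ t, f (s * t⁻¹) •
        (((π s).map (starRingEnd ℂ)) ⊗ₖ ((σ t).map (starRingEnd ℂ))) ∂μ) ∂μ) = 0 := by
  set π' : G → Matrix (Fin d) (Fin d) ℂ := fun s => (π s).map (starRingEnd ℂ) with hπ'
  set σ' : G → Matrix (Fin d') (Fin d') ℂ := fun s => (σ s).map (starRingEnd ℂ) with hσ'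
  -- continuity of entries
  have hπ'cont : Continuous π' := by
    apply continuous_matrix
    intro i j
    exact Continuous.star (hπcont.matrix_elem i j)
  have hσ'cont : Continuous σ' := by
    apply continuous_matrix
    intro i j
    exact Continuous.star (hσcont.matrix_elem i j)
  have hπ'mul : ∀ s t, π' (s * t) = π' s * π' t := by
    intro s t
    simp only [hπ', hπmul, Matrix.map_mul]
  have hσ'mul : ∀ s t, σ' (s * t) = σ' s * σ' t := by
    intro s t
    simp only [hσ', hσmul, Matrix.map_mul]
  -- inverses
  have hπinv : ∀ s, π s⁻¹ = (π s)ᴴ := by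
    intro s
    have h1 : (π s)ᴴ * π s = 1 := mul_eq_one_comm.mp (hπunitary s)
    have h2 : π s * π s⁻¹ = 1 := by rw [← hπmul, mul_inv_cancel, hπone]
    calc π s⁻¹ = ((π s)ᴴ * π s) * π s⁻¹ := by rw [h1, one_mul]
    _ = (π s)ᴴ * (π s * π s⁻¹) := by rw [Matrix.mul_assoc]
    _ = (π s)ᴴ := by rw [h2, Matrix.mul_one]
  have hσinv : ∀ s, σ s⁻¹ = (σ s)ᴴ := by
    intro s
    have h1 : (σ s)ᴴ * σ s = 1 := mul_eq_one_comm.mp (hσunitary s)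
    have h2 : σ s * σ s⁻¹ = 1 := by rw [← hσmul, mul_inv_cancel, hσone]
    calc σ s⁻¹ = ((σ s)ᴴ * σ s) * σ s⁻¹ := by rw [h1, one_mul]
    _ = (σ s)ᴴ * (σ s * σ s⁻¹) := by rw [Matrix.mul_assoc]
    _ = (σ s)ᴴ := by rw [h2, Matrix.mul_one]
  -- the averaged representation
  set g : G → Matrix (Fin d × Fin d') (Fin d × Fin d') ℂ := fun s => π' s ⊗ₖ σ' s with hg
  have hgcont : Continuous g := by
    apply continuous_matrix
    rintro ⟨i, j⟩ ⟨k, l⟩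
    exact ((hπ'cont.matrix_elem i k).mul (hσ'cont.matrix_elem j l))
  have hgmul : ∀ s t, g (s * t) = g s * g t := by
    intro s t
    simp only [hg, hπ'mul, hσ'mul, Matrix.mul_kronecker_mul]
  have hgint : Integrable g μ :=
    hgcont.integrable_of_hasCompactSupport (HasCompactSupport.of_compactSpace _)
  set E : Matrix (Fin d × Fin d') (Fin d × Fin d') ℂ := ∫ s, g s ∂μ with hE
  have hEinv : ∀ u, g u * E = E := by
    intro u
    rw [hE, ← aux_integral_const_mul (g u) hgint]
    calc ∫ s, g u * g s ∂μ = ∫ s, g (u * s) ∂μ := by simp_rw [hgmul]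
    _ = ∫ s, g s ∂μ := integral_mul_left_eq_self g u
  -- E = 0
  have hEzero : E = 0 := by
    have hcol : ∀ (c : Fin d × Fin d') (i : Fin d) (j : Fin d'), E (i, j) c = 0 := by
      intro c
      set V : Matrix (Fin d) (Fin d') ℂ := Matrix.of fun i j => E (i, j) c with hV
      have hVinv : ∀ s, π' s * V * (σ' s)ᵀ = V := by
        intro s
        ext i j
        have h := congrFun (congrFun (hEinv s) (i, j)) c
        have lhs : (g s * E) (i, j) c
            = ∑ k, ∑ l, π' s i k * σ' s j l * E (k, l) c := by
          rw [Matrix.mul_apply, Fintype.sum_prod_type]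
          simp [hg, Matrix.kroneckerMap_apply]
        have rhs : (π' s * V * (σ' s)ᵀ) i j
            = ∑ k, ∑ l, π' s i k * σ' s j l * V k l := by
          simp only [Matrix.mul_apply, Matrix.transpose_apply, Finset.sum_mul]
          rw [Finset.sum_comm]
          congr 1; ext k; congr 1; ext l; ring
        rw [rhs]
        simp only [hV, Matrix.of_apply]
        rw [← lhs, h]
      have hV2 : ∀ s, π' s * V = V * σ s := by
        intro s
        have htr : (σ' s)ᵀ = (σ s)ᴴ := by
          ext i j
          simp [hσ', Matrix.conjTranspose_apply, Matrix.map_apply]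
        have h1 : (σ s)ᴴ * σ s = 1 := mul_eq_one_comm.mp (hσunitary s)
        have h := hVinv s
        rw [htr] at h
        calc π' s * V = π' s * V * ((σ s)ᴴ * σ s) := by rw [h1, Matrix.mul_one]
        _ = (π' s * V * (σ s)ᴴ) * σ s := by
              rw [Matrix.mul_assoc (π' s * V), Matrix.mul_assoc]
        _ = V * σ s := by rw [h]
      have hT : ∀ s, σ s * Vᴴ = Vᴴ * π' s := by
        intro s
        have h := hV2 s⁻¹
        have hπ's : π' s⁻¹ = (π' s)ᴴᵀᵀ := by
          ext i j
          simp [hπ', hπinv, Matrix.conjTranspose_apply, Matrix.map_apply]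
        -- take conjugate transpose of h
        have h' := congrArg Matrix.conjTranspose h
        rw [Matrix.conjTranspose_mul, Matrix.conjTranspose_mul] at h'
        -- h' : Vᴴ * (π' s⁻¹)ᴴ = (σ s⁻¹)ᴴ * Vᴴ
        have e1 : (π' s⁻¹)ᴴ = π' s := by
          ext i j
          simp [hπ', hπinv, Matrix.conjTranspose_apply, Matrix.map_apply]
        have e2 : (σ s⁻¹)ᴴ = σ s := by
          rw [hσinv, Matrix.conjTranspose_conjTranspose]
        rw [e1, e2] at h'
        exact h'.symm
      have hV0 : Vᴴ = 0 := hineq Vᴴ hT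
      have hV0' : V = 0 := by
        have := congrArg Matrix.conjTranspose hV0
        rwa [Matrix.conjTranspose_conjTranspose, Matrix.conjTranspose_zero] at this
      intro i j
      have := congrFun (congrFun hV0' i) j
      simpa [hV] using this
    ext p c
    obtain ⟨i, j⟩ := p
    simpa using hcol c i j
  -- factor the inner integral
  set C : Matrix (Fin d × Fin d') (Fin d × Fin d') ℂ :=
    ∫ u, f u⁻¹ • ((1 : Matrix (Fin d) (Fin d) ℂ) ⊗ₖ σ' u) ∂μ with hC
  have hCint : Integrable (fun u => f u⁻¹ • ((1 : Matrix (Fin d) (Fin d) ℂ) ⊗ₖ σ' u)) μ := by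
    apply Continuous.integrable_of_hasCompactSupport
    · exact ((hf.comp continuous_inv).smul (by
        apply continuous_matrix
        rintro ⟨i, j⟩ ⟨k, l⟩
        exact continuous_const.mul (hσ'cont.matrix_elem j l)))
    · exact HasCompactSupport.of_compactSpace _
  have hinner : ∀ s, (∫ t, f (s * t⁻¹) • (π' s ⊗ₖ σ' t) ∂μ) = C * g s := by
    intro s
    have hcont1 : Continuous fun t => f (s * t⁻¹) • (π' s ⊗ₖ σ' t) := by
      apply Continuous.smul (f := fun t => f (s * t⁻¹)) (g := fun t => π' s ⊗ₖ σ' t)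
      · exact hf.comp (continuous_const.mul continuous_inv)
      · apply continuous_matrix
        rintro ⟨i, j⟩ ⟨k, l⟩
        exact continuous_const.mul (hσ'cont.matrix_elem j l)
    have step1 : (∫ t, f (s * t⁻¹) • (π' s ⊗ₖ σ' t) ∂μ)
        = ∫ u, f (s * (u * s)⁻¹) • (π' s ⊗ₖ σ' (u * s)) ∂μ :=
      (aux_integral_mul_right μ (fun t => f (s * t⁻¹) • (π' s ⊗ₖ σ' t)) hcont1 s).symm
    have step2 : ∀ u : G, f (s * (u * s)⁻¹) • (π' s ⊗ₖ σ' (u * s))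
        = (f u⁻¹ • ((1 : Matrix (Fin d) (Fin d) ℂ) ⊗ₖ σ' u)) * g s := by
      intro u
      have e1 : s * (u * s)⁻¹ = u⁻¹ := by group
      have e2 : π' s ⊗ₖ σ' (u * s)
          = ((1 : Matrix (Fin d) (Fin d) ℂ) ⊗ₖ σ' u) * g s := by
        rw [hσ'mul, hg]
        rw [← Matrix.mul_kronecker_mul, Matrix.one_mul]
      rw [e1, e2, Matrix.smul_mul]
    rw [step1]
    simp_rw [step2]
    rw [aux_integral_mul_const (g s) hCint, hC]
  calc (∫ s, (∫ t, f (s * t⁻¹) • (π' s ⊗ₖ σ' t) ∂μ) ∂μ)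
      = ∫ s, C * g s ∂μ := by simp_rw [hinner]
  _ = C * E := by rw [hE, aux_integral_const_mul C hgint]
  _ = 0 := by rw [hEzero, Matrix.mul_zero]
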